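/- Let Δ be a Lie derivation of R = R_n(K,J). Then Δ(y e_{1,n}) has nonzero components only in positions (1,t) for 1 ≤ t ≤ n, positions (s,n) for s ≠ 1, diagonal positions (k,k) for k ≠ 1, n, and positions (n−1,1), (n−1,2), (n,1), (n,2). -/

import Mathlib

/-- Membership in `R = R_n(K,J)`: entries on and above the main diagonal lie in `J`. -/
def Rmem {K : Type*} [Ring K] {n : ℕ} (J : AddSubgroup K)
    (M : Matrix (Fin n) (Fin n) K) : Prop :=
  ∀ i j : Fin n, i ≤ j → M i j ∈ J

/-- A Lie derivation of `R = R_n(K,J)`. -/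
def IsLieDerOn {K : Type*} [Ring K] {n : ℕ} (J : AddSubgroup K)
    (D : Matrix (Fin n) (Fin n) K → Matrix (Fin n) (Fin n) K) : Prop :=
  (∀ A, Rmem J A → Rmem J (D A)) ∧
  (∀ A B, Rmem J A → Rmem J B → D (A + B) = D A + D B) ∧
  (∀ A B, Rmem J A → Rmem J B →
    D (A * B - B * A) = (D A * B - B * D A) + (A * D B - D B * A))

/-- For a Lie derivation `Δ` of `R`, the matrix `Δ(y e_{1,n})` (for `y ∈ J`)
can be nonzero only in row `1`, column `n`, on the main diagonal, or in positions
`(n-1,1), (n-1,2), (n,1), (n,2)` (1-based; here 0-based `(n-2,0), (n-2,1), (n-1,0), (n-1,1)`). -/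
theorem lie_derivation_corner_shape {K : Type*} [Ring K] {n : ℕ} (hn : 4 ≤ n)
    (h2 : ∀ a : K, a + a = 0 → a = 0)
    (J : AddSubgroup K)
    (hJl : ∀ r : K, ∀ y ∈ J, r * y ∈ J) (hJr : ∀ r : K, ∀ y ∈ J, y * r ∈ J)
    (Δ : Matrix (Fin n) (Fin n) K → Matrix (Fin n) (Fin n) K)
    (hΔ : IsLieDerOn J Δ) :
    ∀ y ∈ J, ∀ s t : Fin n,
      (s : ℕ) ≠ 0 → (t : ℕ) ≠ n - 1 → s ≠ t →
      ¬((s : ℕ) = n - 2 ∧ (t : ℕ) = 0) → ¬((s : ℕ) = n - 2 ∧ (t : ℕ) = 1) →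
      ¬((s : ℕ) = n - 1 ∧ (t : ℕ) = 0) → ¬((s : ℕ) = n - 1 ∧ (t : ℕ) = 1) →
      Δ (Matrix.single ⟨0, by omega⟩ ⟨n - 1, by omega⟩ y) s t = 0 := by
  intro y hy s t hs0 htn hst hx1 hx2 hx3 hx4
  set e0 : Fin n := ⟨0, by omega⟩ with he0
  set eN : Fin n := ⟨n - 1, by omega⟩ with heN
  set E : Matrix (Fin n) (Fin n) K := Matrix.single e0 eN y with hE
  -- E is in R
  have hER : Rmem J E := by
    intro p q _
    by_cases h : e0 = p ∧ eN = q
    · rw [hE, ← h.1, ← h.2, Matrix.single_apply_same]; exact hy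
    · rw [hE, Matrix.single_apply_of_ne _ _ _ _ _ h]; exact J.zero_mem
  -- Δ 0 = 0
  have hΔ0 : Δ 0 = 0 := by
    have h0R : Rmem J (0 : Matrix (Fin n) (Fin n) K) := by
      intro p q _; simp only [Matrix.zero_apply]; exact J.zero_mem
    have := hΔ.2.1 0 0 h0R h0R
    rw [add_zero] at this
    have h' : Δ 0 + 0 = Δ 0 + Δ 0 := by rw [add_zero]; exact this
    exact (add_left_cancel h').symm
  -- Key lemma
  have key : ∀ i j s' t' : Fin n, j < i → i ≠ eN → j ≠ e0 → s' ≠ e0 → t' ≠ eN →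
      (if t' = j then Δ E s' i else 0) = (if s' = i then Δ E j t' else 0) := by
    intro i j s' t' hji hiN hj0 hs' ht'
    set A : Matrix (Fin n) (Fin n) K := Matrix.single i j (1 : K) with hA
    have hAR : Rmem J A := by
      intro p q hpq
      have h : ¬(i = p ∧ j = q) := by
        rintro ⟨rfl, rfl⟩; exact absurd hpq (not_le.mpr hji)
      rw [hA, Matrix.single_apply_of_ne _ _ _ _ _ h]; exact J.zero_mem
    have hcomm : E * A - A * E = 0 := by
      rw [hE, hA, Matrix.single_mul_single_of_ne (h := Ne.symm hiN),
        Matrix.single_mul_single_of_ne (h := hj0), sub_zero]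
    have heq := hΔ.2.2 E A hER hAR
    rw [hcomm, hΔ0] at heq
    have hent := congrFun (congrFun heq.symm s') t'
    rw [Matrix.add_apply, Matrix.sub_apply, Matrix.sub_apply,
      Matrix.single_mul_apply_of_ne y e0 eN s' t' hs' (Δ A),
      Matrix.mul_single_apply_of_ne y e0 eN s' t' ht' (Δ A),
      Matrix.zero_apply] at hent
    -- hent : 0 = (Δ E * A) s' t' - (A * Δ E) s' t' + (0 - 0)
    have h1 : (Δ E * A) s' t' = if t' = j then Δ E s' i else 0 := by
      by_cases h : t' = j
      · subst h; rw [hA, Matrix.mul_single_apply_same, mul_one, if_pos rfl]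
      · rw [hA, Matrix.mul_single_apply_of_ne _ _ _ _ _ h, if_neg h]
    have h2' : (A * Δ E) s' t' = if s' = i then Δ E j t' else 0 := by
      by_cases h : s' = i
      · subst h; rw [hA, Matrix.single_mul_apply_same, one_mul, if_pos rfl]
      · rw [hA, Matrix.single_mul_apply_of_ne _ _ _ _ _ h, if_neg h]
    rw [h1, h2'] at hent
    have h3 : (if t' = j then Δ E s' i else 0) - (if s' = i then Δ E j t' else 0) = 0 := by
      simpa using hent
    exact sub_eq_zero.mp h3
  have hsn : (s : ℕ) < n := s.isLt
  have htn' : (t : ℕ) < n := t.isLt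
  by_cases hc : 2 ≤ (t : ℕ)
  · -- take i = t, j = 1, evaluate at (s, 1)
    have h := key t ⟨1, by omega⟩ s ⟨1, by omega⟩
      (by simp [Fin.lt_def]; omega)
      (by simp [Fin.ne_iff_vne, heN]; omega)
      (by simp [Fin.ne_iff_vne, he0])
      (by simp [Fin.ne_iff_vne, he0]; omega)
      (by simp [Fin.ne_iff_vne, heN]; omega)
    rw [if_pos rfl, if_neg (by simpa [Fin.ne_iff_vne] using fun h => hst (Fin.ext h))] at h
    exact h
  · -- t ≤ 1; then s ∉ {0, n-2, n-1}; take i = s+1, j = s, evaluate at (s+1, t)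
    push_neg at hc
    have hsn2 : (s : ℕ) ≠ n - 2 := by
      intro h; interval_cases ht : (t : ℕ)
      · exact hx1 ⟨h, rfl⟩
      · exact hx2 ⟨h, rfl⟩
    have hsn1 : (s : ℕ) ≠ n - 1 := by
      intro h; interval_cases ht : (t : ℕ)
      · exact hx3 ⟨h, rfl⟩
      · exact hx4 ⟨h, rfl⟩
    have hs3 : (s : ℕ) + 1 < n := by omega
    have h := key ⟨(s : ℕ) + 1, hs3⟩ s ⟨(s : ℕ) + 1, hs3⟩ t
      (by simp [Fin.lt_def])
      (by simp [Fin.ne_iff_vne, heN]; omega)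
      (by simp [Fin.ne_iff_vne, he0]; omega)
      (by simp [Fin.ne_iff_vne, he0])
      (by simp [Fin.ne_iff_vne, heN]; omega)
    rw [if_pos rfl, if_neg (by simpa [Fin.ne_iff_vne] using fun h => hst (Fin.ext h.symm))] at h
    exact h.symm
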